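/- Let N, T be positive integers, let e be an N×T real matrix, and let s_1,…,s_N be nonnegative reals. Define the symmetric N×N matrix η by η_{ij} := T^{-1/2}·(Σ_{t=1}^T e_{it} e_{jt} − T·δ_{ij}·s_i), where δ_{ij} is the Kronecker delta. Then the spectral norm of e satisfies ‖e‖⁸ ≤ 3·T²·Σ_{i,j=1}^N (Σ_{k=1}^N η_{ik} η_{jk})² + 12·T³·Σ_{i,j=1}^N s_i²·η_{ij}² + 3·T⁴·Σ_{i=1}^N s_i⁴. -/

import Mathlib

/-- The spectral norm (largest singular value) of an `N×T` real matrix: the operator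
norm of `x ↦ e x` between Euclidean spaces. -/
noncomputable def specNorm {N T : ℕ} (e : Matrix (Fin N) (Fin T) ℝ) : ℝ :=
  ‖LinearMap.toContinuousLinearMap (Matrix.toEuclideanLin e)‖

/-- The matrix `η_{ij} = T^{-1/2}·(Σ_t e_{it}e_{jt} − T·δ_{ij}·s_i)`. -/
noncomputable def etaMat {N T : ℕ} (e : Matrix (Fin N) (Fin T) ℝ) (s : Fin N → ℝ)
    (i j : Fin N) : ℝ :=
  (Real.sqrt T)⁻¹ * (∑ t, e i t * e j t - (T : ℝ) * (if i = j then s i else 0))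

open Matrix
open scoped Matrix.Norms.L2Operator

/-- The `ℓ²` operator norm of a real matrix is at most its Frobenius norm. -/
lemma l2_opNorm_le_frobenius_aux {m n : ℕ} (M : Matrix (Fin m) (Fin n) ℝ) :
    ‖M‖ ≤ Real.sqrt (∑ i, ∑ j, M i j ^ 2) := by
  rw [Matrix.l2_opNorm_def]
  refine ContinuousLinearMap.opNorm_le_bound _ (Real.sqrt_nonneg _) fun x => ?_
  simp only [LinearEquiv.trans_apply, LinearMap.coe_toContinuousLinearMap']
  rw [EuclideanSpace.norm_eq, EuclideanSpace.norm_eq x, ← Real.sqrt_mul (by positivity)]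
  apply Real.sqrt_le_sqrt
  have key : ∀ i, ‖Matrix.toEuclideanLin M x i‖ ^ 2 ≤ (∑ j, M i j ^ 2) * ∑ j, ‖x j‖ ^ 2 := by
    intro i
    have hv : Matrix.toEuclideanLin M x i = ∑ j, M i j * x j := by
      simp [Matrix.toEuclideanLin_apply, Matrix.mulVec, dotProduct]
    rw [hv, Real.norm_eq_abs, sq_abs]
    have h := Finset.sum_mul_sq_le_sq_mul_sq Finset.univ (fun j => M i j) (fun j => x j)
    simpa [Real.norm_eq_abs, sq_abs] using h
  calc ∑ i, ‖Matrix.toEuclideanLin M x i‖ ^ 2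
      ≤ ∑ i, (∑ j, M i j ^ 2) * ∑ j, ‖x j‖ ^ 2 := Finset.sum_le_sum fun i _ => key i
    _ = (∑ i, ∑ j, M i j ^ 2) * ∑ j, ‖x j‖ ^ 2 := by rw [Finset.sum_mul]

/-- `‖e‖⁸ ≤ ‖(e eᵀ)(e eᵀ)‖_F²` entrywise. -/
lemma specNorm_pow8_le_aux {N T : ℕ} (e : Matrix (Fin N) (Fin T) ℝ) :
    specNorm e ^ 8 ≤ ∑ i, ∑ j, ((e * eᵀ * (e * eᵀ)) i j) ^ 2 := by
  have h0 : specNorm e = ‖e‖ := rfl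
  have ht : eᵀ = eᴴ := by ext i j; simp [Matrix.conjTranspose_apply]
  have h1 : ‖e * eᵀ‖ = ‖e‖ * ‖e‖ := by
    rw [ht, ← Matrix.l2_opNorm_conjTranspose e]
    have := Matrix.l2_opNorm_conjTranspose_mul_self (eᴴ)
    rwa [Matrix.conjTranspose_conjTranspose] at this
  have hB : (e * eᵀ)ᴴ = e * eᵀ := by
    rw [ht, Matrix.conjTranspose_mul, Matrix.conjTranspose_conjTranspose]
  have h2 := Matrix.l2_opNorm_conjTranspose_mul_self (e * eᵀ)
  rw [hB] at h2
  have h3 := l2_opNorm_le_frobenius_aux (e * eᵀ * (e * eᵀ))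
  have h4 : ‖e * eᵀ * (e * eᵀ)‖ ^ 2 ≤ ∑ i, ∑ j, ((e * eᵀ * (e * eᵀ)) i j) ^ 2 := by
    have := pow_le_pow_left₀ (norm_nonneg _) h3 2
    rwa [Real.sq_sqrt (by positivity)] at this
  calc specNorm e ^ 8 = (‖e * eᵀ‖ * ‖e * eᵀ‖) ^ 2 := by rw [h0, h1]; ring
    _ = ‖e * eᵀ * (e * eᵀ)‖ ^ 2 := by rw [h2]
    _ ≤ _ := h4

/-- Deterministic eighth-power bound for the spectral norm:
`‖e‖⁸ ≤ 3T²·Σ_{i,j}(Σ_k η_{ik}η_{jk})² + 12T³·Σ_{i,j}s_i²η_{ij}² + 3T⁴·Σ_i s_i⁴`. -/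
theorem spectral_norm_eighth_power_bound {N T : ℕ} (hN : 0 < N) (hT : 0 < T)
    (e : Matrix (Fin N) (Fin T) ℝ) (s : Fin N → ℝ) (hs : ∀ i, 0 ≤ s i) :
    specNorm e ^ 8 ≤
      3 * (T : ℝ) ^ 2 * ∑ i, ∑ j, (∑ k, etaMat e s i k * etaMat e s j k) ^ 2
        + 12 * (T : ℝ) ^ 3 * ∑ i, ∑ j, s i ^ 2 * etaMat e s i j ^ 2
        + 3 * (T : ℝ) ^ 4 * ∑ i, s i ^ 4 := by
  refine le_trans (specNorm_pow8_le_aux e) ?_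
  set η := etaMat e s with hη
  set r := Real.sqrt T with hrdef
  have hTpos : (0:ℝ) < T := by exact_mod_cast hT
  have hr : r ^ 2 = T := Real.sq_sqrt hTpos.le
  have hrpos : 0 < r := Real.sqrt_pos.mpr hTpos
  have hB : ∀ i j, (e * eᵀ) i j = r * η i j + (T:ℝ) * (if i = j then s i else 0) := by
    intro i j
    rw [Matrix.mul_apply]
    simp only [hη, etaMat, Matrix.transpose_apply, ← hrdef]
    field_simp
    ring
  have hsym : ∀ i j, η i j = η j i := by
    intro i j
    simp only [hη, etaMat]
    congr 2
    · exact Finset.sum_congr rfl fun t _ => mul_comm _ _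
    · rcases eq_or_ne i j with h | h
      · subst h; rfl
      · simp [h, Ne.symm h]
  have hBB : ∀ i j, (e * eᵀ * (e * eᵀ)) i j =
      (T:ℝ) * (∑ k, η i k * η j k) + (T:ℝ) * r * ((s i + s j) * η i j)
        + (T:ℝ) ^ 2 * (if i = j then s i * s j else 0) := by
    intro i j
    rw [Matrix.mul_apply]
    have expand : ∀ k, (e * eᵀ) i k * (e * eᵀ) k j =
        (T:ℝ) * (η i k * η j k)
          + ((T:ℝ) * r * s j) * (if k = j then η i k else 0)
          + ((T:ℝ) * r * s i) * (if i = k then η j k else 0)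
          + (T:ℝ) ^ 2 * (if i = k then (if k = j then s i * s j else 0) else 0) := by
      intro k
      rw [hB i k, hB k j, hsym k j]
      rcases eq_or_ne i k with rfl | h1
      · rcases eq_or_ne i j with rfl | h2
        · simp [← hr]; ring
        · simp [h2, ← hr]; ring
      · rcases eq_or_ne k j with rfl | h2
        · simp [h1, ← hr]; ring
        · simp [h1, h2, ← hr]; ring
    rw [Finset.sum_congr rfl fun k _ => expand k]
    simp only [Finset.sum_add_distrib, ← Finset.mul_sum, Finset.sum_ite_eq, Finset.sum_ite_eq',
      Finset.mem_univ, if_true]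
    rw [hsym j i]
    ring
  have hsq : ∀ i j, ((e * eᵀ * (e * eᵀ)) i j) ^ 2 ≤
      3 * (T:ℝ) ^ 2 * (∑ k, η i k * η j k) ^ 2
        + 6 * (T:ℝ) ^ 3 * ((s i ^ 2 + s j ^ 2) * η i j ^ 2)
        + 3 * (T:ℝ) ^ 4 * (if i = j then s i ^ 4 else 0) := by
    intro i j
    rw [hBB i j, ← hr]
    rcases eq_or_ne i j with rfl | h
    · simp only [if_true]
      nlinarith [sq_nonneg (r^2 * (∑ k, η i k * η i k) - r^3 * ((s i + s i) * η i i)),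
        sq_nonneg (r^2 * (∑ k, η i k * η i k) - r^4 * (s i * s i)),
        sq_nonneg (r^3 * ((s i + s i) * η i i) - r^4 * (s i * s i))]
    · simp only [h, if_false]
      nlinarith [sq_nonneg (r^2 * (∑ k, η i k * η j k) - r^3 * ((s i + s j) * η i j)),
        sq_nonneg ((s i - s j) * η i j), sq_nonneg ((s i + s j) * η i j),
        mul_nonneg (mul_nonneg (pow_nonneg hrpos.le 6) (sq_nonneg (η i j))) (sq_nonneg (s i - s j))]
  have hmid : ∑ i, ∑ j, (s i ^ 2 + s j ^ 2) * η i j ^ 2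
      = 2 * ∑ i, ∑ j, s i ^ 2 * η i j ^ 2 := by
    have h2 : ∑ i, ∑ j, s j ^ 2 * η i j ^ 2 = ∑ i, ∑ j, s i ^ 2 * η i j ^ 2 := by
      rw [Finset.sum_comm]
      exact Finset.sum_congr rfl fun x _ => Finset.sum_congr rfl fun y _ => by rw [hsym y x]
    simp only [add_mul, Finset.sum_add_distrib, h2]
    ring
  calc ∑ i, ∑ j, ((e * eᵀ * (e * eᵀ)) i j) ^ 2
      ≤ ∑ i, ∑ j, (3 * (T:ℝ) ^ 2 * (∑ k, η i k * η j k) ^ 2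
          + 6 * (T:ℝ) ^ 3 * ((s i ^ 2 + s j ^ 2) * η i j ^ 2)
          + 3 * (T:ℝ) ^ 4 * (if i = j then s i ^ 4 else 0)) :=
        Finset.sum_le_sum fun i _ => Finset.sum_le_sum fun j _ => hsq i j
    _ = 3 * (T:ℝ) ^ 2 * ∑ i, ∑ j, (∑ k, η i k * η j k) ^ 2
          + 6 * (T:ℝ) ^ 3 * (∑ i, ∑ j, (s i ^ 2 + s j ^ 2) * η i j ^ 2)
          + 3 * (T:ℝ) ^ 4 * ∑ i, s i ^ 4 := by
        simp only [Finset.sum_add_distrib, ← Finset.mul_sum, Finset.sum_ite_eq,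
          Finset.mem_univ, if_true]
    _ = _ := by rw [hmid]; ring
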